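/- Let b_4 : ℕ → {0,1,2,3} be the fixed point starting with 0 of the morphism 0 ↦ 01, 1 ↦ 21, 2 ↦ 03, 3 ↦ 23, and let g_2 be the 19-uniform morphism from {0,1,2,3}* to {0,1}* defined by g_2(0) = 0000101001110110100, g_2(1) = 0011100010100111101, g_2(2) = 0000111100010110100, g_2(3) = 0011110110100111101. Then the infinite binary word g_2(b_4) avoids every conjugacy class of length at least 5: there is no finite word u with |u| ≥ 5 such that every cyclic conjugate of u is a factor of g_2(b_4). -/
import Mathlib


/-- `u` is a factor of the infinite word `x`. -/
def IsFactorOfInf {α : Type*} (u : List α) (x : ℕ → α) : Prop :=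
  ∃ i : ℕ, u = (List.range u.length).map fun j => x (i + j)

/-- The morphism `0 ↦ 01, 1 ↦ 21, 2 ↦ 03, 3 ↦ 23` whose fixed point
starting with `0` is `b₄`. -/
def mb4 : Fin 4 → List (Fin 4) := ![[0, 1], [2, 1], [0, 3], [2, 3]]

/-- The 19-uniform morphism `g₂ : {0,1,2,3}* → {0,1}*`. -/
def g2 : Fin 4 → List (Fin 2) :=
  ![[0, 0, 0, 0, 1, 0, 1, 0, 0, 1, 1, 1, 0, 1, 1, 0, 1, 0, 0],
    [0, 0, 1, 1, 1, 0, 0, 0, 1, 0, 1, 0, 0, 1, 1, 1, 1, 0, 1],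
    [0, 0, 0, 0, 1, 1, 1, 1, 0, 0, 0, 1, 0, 1, 1, 0, 1, 0, 0],
    [0, 0, 1, 1, 1, 1, 0, 1, 1, 0, 1, 0, 0, 1, 1, 1, 1, 0, 1]]

set_option maxRecDepth 10000

namespace Stmt3

def f0 : Fin 4 → Fin 4 := ![0, 2, 0, 2]
def f1 : Fin 4 → Fin 4 := ![1, 1, 3, 3]

def S2 : List (Fin 4 × Fin 4) := [(0,1),(0,3),(1,0),(1,2),(2,1),(2,3),(3,0),(3,2)]
def S3 : List (Fin 4 × Fin 4 × Fin 4) :=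
  [(0,1,2),(0,3,2),(1,0,1),(1,0,3),(1,2,1),(1,2,3),(2,1,0),(2,3,0),(3,0,1),(3,0,3),(3,2,1),(3,2,3)]

def G (r : ℕ) (a b : Fin 4) (k : ℕ) : Fin 2 :=
  if r + k < 19 then (g2 a).getD (r + k) 0 else (g2 b).getD (r + k - 19) 0

/-- little-endian encoding of the window `y i, y (i+1), …, y (i+n-1)`. -/
def enc (y : ℕ → Fin 2) : ℕ → ℕ → ℕ
  | _, 0 => 0
  | i, n+1 => (y i).val + 2 * enc y (i+1) n

lemma enc_congr {y z : ℕ → Fin 2} :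
    ∀ {n i j : ℕ}, (∀ k, k < n → y (i + k) = z (j + k)) → enc y i n = enc z j n := by
  intro n
  induction n with
  | zero => intro i j _; rfl
  | succ m ih =>
    intro i j h
    have h0 : y i = z j := by simpa using h 0 (Nat.succ_pos m)
    have hrec : enc y (i+1) m = enc z (j+1) m := by
      apply ih
      intro k hk
      have := h (k+1) (by omega)
      simpa [Nat.add_assoc, Nat.add_comm 1 k] using this
    simp [enc, h0, hrec]

lemma enc_snoc (y : ℕ → Fin 2) : ∀ (n i : ℕ),
    enc y i (n+1) = enc y i n + (y (i + n)).val * 2 ^ n := by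
  intro n
  induction n with
  | zero => intro i; simp [enc]
  | succ m ih =>
    intro i
    have h1 : enc y i (m+2) = (y i).val + 2 * enc y (i+1) (m+1) := rfl
    have h2 : enc y i (m+1) = (y i).val + 2 * enc y (i+1) m := rfl
    rw [h1, ih (i+1), h2]
    have : i + 1 + m = i + (m+1) := by omega
    rw [this]
    ring

def rotN (n v : ℕ) : ℕ := v / 2 + v % 2 * 2 ^ (n - 1)

lemma enc_rot {y : ℕ → Fin 2} {i n : ℕ} (hn : 1 ≤ n) (hy : y (i + n) = y i) :
    enc y (i+1) n = rotN n (enc y i n) := by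
  obtain ⟨m, rfl⟩ : ∃ m, n = m + 1 := ⟨n - 1, by omega⟩
  have h1 : enc y (i+1) (m+1) = enc y (i+1) m + (y (i+1+m)).val * 2 ^ m := enc_snoc y m (i+1)
  have h2 : y (i+1+m) = y i := by
    have : i + 1 + m = i + (m+1) := by omega
    rw [this, hy]
  have h3 : enc y i (m+1) = (y i).val + 2 * enc y (i+1) m := rfl
  rw [h1, h2, h3]
  unfold rotN
  have hv : (y i).val = 0 ∨ (y i).val = 1 := by omega
  rcases hv with hv | hv <;> rw [hv] <;> simp <;> omega

def SYNC14 : List (Nat × Nat) := [(0, 9500), (0, 9660), (0, 10480), (0, 11856), (1, 12942), (1, 13022), (1, 13432), (1, 14120), (2, 6716), (2, 7060), (2, 14663), (2, 14703), (3, 11550), (3, 11722), (3, 15523), (3, 15543), (4, 5775), (4, 5861), (4, 7761), (4, 7771), (5, 2887), (5, 2930), (5, 12072), (5, 12077), (6, 1443), (6, 1465), (6, 6036), (6, 6038), (7, 721), (7, 732), (7, 3018), (7, 3019), (8, 1509), (8, 8552), (8, 8558), (9, 754), (9, 12468), (9, 12471), (10, 8569), (10, 14426), (10, 14427), (11, 4284),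 (11, 7213), (11, 12476), (11, 15405), (12, 3606), (12, 7702), (12, 10334), (12, 14430), (13, 1803), (13, 5167), (13, 12043), (13, 15407), (14, 2583), (14, 7703), (14, 9093), (14, 14213), (15, 3851), (15, 4546), (15, 7106), (15, 9483), (16, 1925), (16, 10465), (16, 11745), (16, 12933), (17, 5232), (17, 5872), (17, 9154), (17, 14658), (18, 2616), (18, 2936), (18, 4577), (18, 7329)]
def T5 : List Nat := [1, 2, 3, 5, 7, 8, 10, 11, 13, 14, 15, 16, 17, 18, 20, 22, 23, 24, 25, 26, 27, 28, 30]
def T6 : List Nat := [2, 5, 7, 10, 11, 14, 15, 16, 17, 20, 22, 23, 26, 27, 28, 30, 33, 35, 37, 40, 45, 46, 47, 48, 50, 52, 55, 56, 57, 60]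
def T7 : List Nat := [5, 11, 14, 15, 20, 22, 23, 28, 30, 33, 35, 40, 45, 47, 52, 55, 56, 57, 60, 66, 71, 74, 75, 80, 81, 90, 91, 92, 94, 97, 101, 104, 110, 111, 112, 114, 120, 121]
def T8 : List Nat := [11, 22, 23, 28, 30, 40, 45, 47, 56, 60, 66, 71, 80, 81, 90, 91, 94, 104, 110, 111, 112, 114, 120, 121, 133, 142, 143, 148, 150, 161, 163, 180, 183, 185, 188, 194, 202, 203, 209, 220, 222, 225, 229, 240, 242]
def T9 : List Nat := [22, 23, 45, 47, 56, 60, 80, 81, 90, 91, 94, 112, 120, 133, 142, 143, 161, 163, 180, 183, 188, 209, 220, 222, 225, 229, 240, 242, 267, 284, 286, 296, 301, 322, 327, 360, 366, 367, 370, 376, 377, 389, 404, 406, 419, 441, 444, 450, 458, 459, 481, 485]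
def T10 : List Nat := [45, 47, 90, 91, 94, 112, 120, 161, 163, 180, 183, 188, 225, 240, 267, 284, 286, 322, 327, 360, 366, 367, 377, 419, 441, 444, 450, 458, 481, 485, 534, 535, 568, 572, 592, 593, 603, 645, 654, 655, 721, 732, 734, 741, 752, 754, 779, 808, 813, 839, 882, 888, 901, 916, 918, 962, 970, 971]
def T11 : List Nat := [90, 91, 94, 180, 183, 188, 225, 240, 322, 327, 360, 366, 367, 377, 450, 481, 535, 568, 572, 645, 654, 721, 732, 734, 754, 839, 882, 888, 901, 916, 962, 970, 971, 1069, 1071, 1136, 1144, 1185, 1187, 1207, 1291, 1308, 1310, 1443, 1465, 1468, 1482, 1505, 1509, 1558, 1559, 1616, 1617, 1627, 1679, 1765, 1776, 1803, 1832, 1837, 1925, 1940, 1942]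
def T12 : List Nat := [180, 183, 188, 360, 366, 377, 450, 481, 645, 654, 721, 732, 734, 754, 901, 962, 1071, 1136, 1144, 1291, 1308, 1443, 1465, 1468, 1509, 1679, 1765, 1776, 1803, 1832, 1925, 1940, 1942, 2138, 2139, 2142, 2273, 2288, 2370, 2375, 2415, 2583, 2616, 2620, 2887, 2930, 2936, 2964, 3010, 3018, 3019, 3117, 3119, 3233, 3235, 3255, 3358, 3530, 3553, 3606, 3607, 3664, 3665, 3675, 3851, 3880, 3885]
def T13 : List Nat := [360, 366, 377, 721, 732, 754, 901, 962, 1291, 1308, 1443, 1465, 1468, 1509, 1803, 1925, 2142, 2273, 2288, 2583, 2616, 2887, 2930, 2936, 3018, 3019, 3358, 3530, 3553, 3606, 3664, 3851, 3880, 3885, 4276, 4279, 4284, 4546, 4577, 4741, 4750, 4830, 5167, 5232, 5240, 5775, 5861, 5872, 5928, 6021, 6036, 6038, 6234, 6235, 6238, 6466, 6471, 6511, 6716, 7060, 7106, 7213, 7215, 7329, 7331, 7351, 7702, 7703, 7761, 7771]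
def T14 : List Nat := [721, 732, 754, 1443, 1465, 1509, 1803, 1925, 2583, 2616, 2887, 2930, 2936, 3018, 3019, 3606, 3851, 4284, 4546, 4577, 5167, 5232, 5775, 5861, 5872, 6036, 6038, 6716, 7060, 7106, 7213, 7329, 7702, 7703, 7761, 7771, 8552, 8558, 8569, 9093, 9154, 9483, 9500, 9660, 10334, 10465, 10480, 11550, 11722, 11745, 11856, 12043, 12072, 12077, 12468, 12471, 12476, 12933, 12942, 13022, 13432, 14120, 14213, 14426, 14427, 14430, 14658, 14663, 14703, 15405, 15407, 15523, 15543]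
def T19 : List Nat := [23100, 23444, 24145, 24155, 46200, 46888, 48291, 48311, 57704, 57710, 61628, 82674, 83723, 92400, 93776, 93963, 96583, 96623, 115409, 115420, 123257, 137108, 137110, 145498, 145499, 146479, 165349, 167446, 184801, 187553, 187926, 193166, 193246, 214917, 225925, 227418, 227419, 230819, 230841, 234543, 246481, 246492, 246514, 248376, 248696, 273694, 273866, 274216, 274221, 290996, 290999, 292958, 303481, 304005, 309125, 330698, 330699, 334893, 335383, 369602, 375106, 375853, 379415, 385384, 385390, 386332, 386492, 398991, 399077, 399252, 399254, 413884, 414146, 416706, 429835, 451851, 454836, 454839, 461639, 461682, 461770, 461771, 469086, 469217, 470497, 492963, 492985, 493029, 496752, 497392]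
def TT : Nat → List Nat := fun n => match n with
  | 5 => T5
  | 6 => T6
  | 7 => T7
  | 8 => T8
  | 9 => T9
  | 10 => T10
  | 11 => T11
  | 12 => T12
  | 13 => T13
  | 14 => T14
  | 19 => T19
  | _ => []

lemma sync_mem : ∀ (r : Fin 19) (P : Fin 4 × Fin 4), P ∈ S2 →
    ((r.val, enc (G r.val P.1 P.2) 0 14) : Nat × Nat) ∈ SYNC14 := by decide

lemma sync_uniq : ∀ x ∈ SYNC14, ∀ y ∈ SYNC14, x.2 = y.2 → x.1 = y.1 := by decide

lemma TT_mem : ∀ n ∈ ([5,6,7,8,9,10,11,12,13,14,19] : List Nat),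
    ∀ (r : Fin 19) (P : Fin 4 × Fin 4), P ∈ S2 → enc (G r.val P.1 P.2) 0 n ∈ TT n := by decide

lemma TT_cert : ∀ n ∈ ([5,6,7,8,9,10,11,12,13,14,19] : List Nat),
    ∀ v ∈ TT n, ∃ k, k < n ∧ (rotN n)^[k] v ∉ TT n := by decide

section B4

variable {b4 : ℕ → Fin 4}

lemma hsplit (hfix : ∀ n, [b4 (2 * n), b4 (2 * n + 1)] = mb4 (b4 n)) (n : ℕ) : b4 (2*n) = f0 (b4 n) ∧ b4 (2*n+1) = f1 (b4 n) := by
  have h := hfix n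
  have hm : ∀ a : Fin 4, mb4 a = [f0 a, f1 a] := by decide
  rw [hm (b4 n)] at h
  exact ⟨(List.cons.injEq _ _ _ _ ▸ h).1, by
    have := (List.cons.injEq _ _ _ _ ▸ h).2
    exact ((List.cons.injEq _ _ _ _ ▸ this)).1⟩

lemma hpar (hfix : ∀ n, [b4 (2 * n), b4 (2 * n + 1)] = mb4 (b4 n)) (k : ℕ) : (b4 k).val % 2 = k % 2 := by
  have hf0 : ∀ a : Fin 4, (f0 a).val % 2 = 0 := by decide
  have hf1 : ∀ a : Fin 4, (f1 a).val % 2 = 1 := by decide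
  rcases Nat.even_or_odd k with ⟨j, hj⟩ | ⟨j, hj⟩
  · have h2 : k = 2*j := by omega
    rw [h2, (hsplit hfix j).1]
    rw [hf0]; omega
  · have h2 : k = 2*j+1 := by omega
    rw [h2, (hsplit hfix j).2]
    rw [hf1]; omega

lemma hS2 (hfix : ∀ n, [b4 (2 * n), b4 (2 * n + 1)] = mb4 (b4 n)) : ∀ i, (b4 i, b4 (i+1)) ∈ S2 := by
  intro i
  induction i using Nat.strong_induction_on with
  | _ i ih =>
    rcases Nat.even_or_odd i with ⟨j, hj⟩ | ⟨j, hj⟩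
    · have h2 : i = 2*j := by omega
      have e1 : b4 i = f0 (b4 j) := h2 ▸ (hsplit hfix j).1
      have e2 : b4 (i+1) = f1 (b4 j) := by
        have : i + 1 = 2*j+1 := by omega
        rw [this]; exact (hsplit hfix j).2
      rw [e1, e2]
      exact (by decide : ∀ a : Fin 4, (f0 a, f1 a) ∈ S2) (b4 j)
    · have h2 : i = 2*j+1 := by omega
      have e1 : b4 i = f1 (b4 j) := h2 ▸ (hsplit hfix j).2
      have e2 : b4 (i+1) = f0 (b4 (j+1)) := by
        have : i + 1 = 2*(j+1) := by omega
        rw [this]; exact (hsplit hfix (j+1)).1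
      have hpair : (b4 j, b4 (j+1)) ∈ S2 := ih j (by omega)
      rw [e1, e2]
      exact (by decide : ∀ P ∈ S2, (f1 P.1, f0 P.2) ∈ S2) _ hpair

lemma hS3 (hfix : ∀ n, [b4 (2 * n), b4 (2 * n + 1)] = mb4 (b4 n)) : ∀ i, (b4 i, b4 (i+1), b4 (i+2)) ∈ S3 := by
  intro i
  rcases Nat.even_or_odd i with ⟨j, hj⟩ | ⟨j, hj⟩
  · have h2 : i = 2*j := by omega
    have e1 : b4 i = f0 (b4 j) := h2 ▸ (hsplit hfix j).1
    have e2 : b4 (i+1) = f1 (b4 j) := by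
      have : i + 1 = 2*j+1 := by omega
      rw [this]; exact (hsplit hfix j).2
    have e3 : b4 (i+2) = f0 (b4 (j+1)) := by
      have : i + 2 = 2*(j+1) := by omega
      rw [this]; exact (hsplit hfix (j+1)).1
    rw [e1, e2, e3]
    exact (by decide : ∀ P ∈ S2, (f0 P.1, f1 P.1, f0 P.2) ∈ S3) _ (hS2 hfix j)
  · have h2 : i = 2*j+1 := by omega
    have e1 : b4 i = f1 (b4 j) := h2 ▸ (hsplit hfix j).2
    have e2 : b4 (i+1) = f0 (b4 (j+1)) := by
      have : i + 1 = 2*(j+1) := by omega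
      rw [this]; exact (hsplit hfix (j+1)).1
    have e3 : b4 (i+2) = f1 (b4 (j+1)) := by
      have : i + 2 = 2*(j+1)+1 := by omega
      rw [this]; exact (hsplit hfix (j+1)).2
    rw [e1, e2, e3]
    exact (by decide : ∀ P ∈ S2, (f1 P.1, f0 P.2, f1 P.2) ∈ S3) _ (hS2 hfix j)

def pI (a b : Fin 4) : Fin 4 := ⟨a.val / 2 + 2 * (b.val / 2), by omega⟩

lemma descent (hfix : ∀ n, [b4 (2 * n), b4 (2 * n + 1)] = mb4 (b4 n)) : ∀ m, 1 ≤ m → ∀ Z : ℕ → Fin 4, (∀ c, Z (c + m) = Z c) →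
    (∀ t, ∃ s, ∀ j, j ≤ m → b4 (s + j) = Z (t + j)) → False := by
  intro m
  induction m using Nat.strong_induction_on with
  | _ m ih =>
    intro hm1 Z hper hwin
    have halt : ∀ t, (Z (t+1)).val % 2 ≠ (Z t).val % 2 := by
      intro t
      obtain ⟨s, hs⟩ := hwin t
      have h0 : b4 s = Z t := by simpa using hs 0 (by omega)
      have h1 : b4 (s+1) = Z (t+1) := hs 1 hm1
      have hp0 := hpar hfix s
      have hp1 := hpar hfix (s+1)
      rw [h0] at hp0
      rw [h1] at hp1
      omega
    have hZpar : ∀ t, (Z t).val % 2 = ((Z 0).val + t) % 2 := by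
      intro t
      induction t with
      | zero => simp
      | succ u ihp =>
        have := halt u
        omega
    rcases Nat.even_or_odd m with ⟨m', hm'⟩ | ⟨m', hm'⟩
    swap
    · -- m odd : contradiction via parity
      have h1 := hper 0
      have h2 := hZpar m
      simp only [Nat.zero_add] at h1
      rw [h1] at h2
      omega
    · -- m = 2 m'
      have hm2 : m = 2 * m' := by omega
      rcases Nat.lt_or_ge m' 2 with hm'2 | hm'2
      · -- m' = 1, i.e. m = 2 : use S3
        have hm'1 : m' = 1 := by omega
        have hmm : m = 2 := by omega
        subst hmm
        obtain ⟨s, hs⟩ := hwin 0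
        obtain ⟨s', hs'⟩ := hwin 1
        have t1 : (b4 s, b4 (s+1), b4 (s+2)) ∈ S3 := hS3 hfix s
        have t2 : (b4 s', b4 (s'+1), b4 (s'+2)) ∈ S3 := hS3 hfix s'
        have e1 : Z 2 = Z 0 := by have := hper 0; simpa using this
        have e2 : Z 3 = Z 1 := by have := hper 1; simpa using this
        have a0 : b4 s = Z 0 := by simpa using hs 0 (by omega)
        have a1 : b4 (s+1) = Z 1 := by simpa using hs 1 (by omega)
        have a2 : b4 (s+2) = Z 0 := by have := hs 2 (by omega); simpa [e1] using this
        have b0 : b4 s' = Z 1 := by simpa using hs' 0 (by omega)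
        have b1 : b4 (s'+1) = Z 0 := by have := hs' 1 (by omega); simpa [e1] using this
        have b2 : b4 (s'+2) = Z 1 := by have := hs' 2 (by omega); simpa [e2] using this
        rw [a0, a1, a2] at t1
        rw [b0, b1, b2] at t2
        exact (by decide : ∀ a b : Fin 4, ¬((a,b,a) ∈ S3 ∧ (b,a,b) ∈ S3)) (Z 0) (Z 1) ⟨t1, t2⟩
      · -- m' ≥ 2
        set ε := (Z 0).val % 2 with hε
        have hZeven : ∀ t, (Z (ε + 2*t)).val % 2 = 0 := by
          intro t; have := hZpar (ε + 2*t); omega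
        have hZodd : ∀ t, (Z (ε + 2*t + 1)).val % 2 = 1 := by
          intro t; have := hZpar (ε + 2*t + 1); omega
        have hpI : ∀ a b : Fin 4, a.val % 2 = 0 → b.val % 2 = 1 → mb4 (pI a b) = [a, b] := by decide
        set W : ℕ → Fin 4 := fun t => pI (Z (ε + 2*t)) (Z (ε + 2*t + 1)) with hW
        have hmbW : ∀ t, mb4 (W t) = [Z (ε + 2*t), Z (ε + 2*t + 1)] :=
          fun t => hpI _ _ (hZeven t) (hZodd t)
        have mb4inj : ∀ a a' : Fin 4, mb4 a = mb4 a' → a = a' := by decide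
        have hWper : ∀ t, W (t + m') = W t := by
          intro t
          have e1 : Z (ε + 2*(t+m')) = Z (ε + 2*t) := by
            have := hper (ε + 2*t)
            have h : ε + 2*(t+m') = ε + 2*t + m := by omega
            rw [h]; exact this
          have e2 : Z (ε + 2*(t+m') + 1) = Z (ε + 2*t + 1) := by
            have := hper (ε + 2*t + 1)
            have h : ε + 2*(t+m') + 1 = ε + 2*t + 1 + m := by omega
            rw [h]; exact this
          simp only [hW, e1, e2]
        -- windows of W
        have hWwin0 : ∀ t, ∃ σ, (∀ k, k < m' → b4 (σ + 1 + k) = W (t + 1 + k)) ∧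
            (b4 σ).val / 2 = (W t).val / 2 ∧ (b4 σ).val % 2 = σ % 2 ∧
            (b4 (σ+1)).val % 2 = (σ+1) % 2 := by
          intro t
          obtain ⟨s, hs⟩ := hwin (ε + 2*t + 1)
          have hsodd : s % 2 = 1 := by
            have hp0 := hpar hfix s
            have h0 := hs 0 (by omega)
            simp only [Nat.add_zero] at h0
            rw [h0] at hp0
            have := hZodd t
            omega
          refine ⟨s / 2, ?_, ?_, ?_, ?_⟩
          · intro k hk
            apply mb4inj
            have hsp := hsplit hfix (s/2 + 1 + k)
            have i1 : 2*(s/2+1+k) = s + (1 + 2*k) := by omega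
            have i2 : s + (1 + 2*k) + 1 = s + (2 + 2*k) := by omega
            rw [i1] at hsp
            rw [i2] at hsp
            have e1 : b4 (s + (1+2*k)) = Z (ε + 2*t + 1 + (1+2*k)) := hs (1+2*k) (by omega)
            have e2 : b4 (s + (2+2*k)) = Z (ε + 2*t + 1 + (2+2*k)) := hs (2+2*k) (by omega)
            have j1 : ε + 2*t + 1 + (1+2*k) = ε + 2*(t+1+k) := by omega
            have j2 : ε + 2*t + 1 + (2+2*k) = ε + 2*(t+1+k) + 1 := by omega
            have hm4 : ∀ a : Fin 4, mb4 a = [f0 a, f1 a] := by decide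
            rw [hm4, ← hsp.1, ← hsp.2, e1, e2, j1, j2, hmbW (t+1+k)]
          · have hsp := hsplit hfix (s/2)
            have i1 : 2*(s/2)+1 = s := by omega
            rw [i1] at hsp
            have h0 := hs 0 (by omega)
            simp only [Nat.add_zero] at h0
            have hf1v : ∀ a : Fin 4, (f1 a).val = 2*(a.val/2) + 1 := by decide
            have hWv : (W t).val / 2 = (Z (ε + 2*t + 1)).val / 2 := by
              simp only [hW, pI]
              have h1 : (Z (ε + 2*t)).val < 4 := (Z (ε + 2*t)).isLt
              have h2 : (Z (ε + 2*t + 1)).val < 4 := (Z (ε + 2*t + 1)).isLt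
              omega
            have := hf1v (b4 (s/2))
            rw [← hsp.2, h0] at this
            omega
          · exact hpar hfix (s/2)
          · exact hpar hfix (s/2+1)
        -- alternation of W
        have hWalt' : ∀ τ, (W (τ+2)).val % 2 ≠ (W (τ+1)).val % 2 := by
          intro τ
          obtain ⟨σ, hfull, _, _, _⟩ := hWwin0 τ
          have e1 := hfull 0 (by omega)
          have e2 := hfull 1 (by omega)
          have hp1 := hpar hfix (σ+1)
          have hp2 := hpar hfix (σ+1+1)
          simp only [Nat.add_zero] at e1
          rw [e1] at hp1
          rw [e2] at hp2
          have i1 : τ + 1 + 0 = τ + 1 := by omega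
          have i2 : τ + 1 + 1 = τ + 2 := by omega
          rw [i1] at hp1
          rw [i2] at hp2
          omega
        have hWalt : ∀ τ, (W (τ+1)).val % 2 ≠ (W τ).val % 2 := by
          intro τ
          rcases Nat.eq_zero_or_pos τ with h0 | hpos
          · subst h0
            have h := hWalt' (m' - 1)
            have i1 : m' - 1 + 2 = 1 + m' := by omega
            have i2 : m' - 1 + 1 = 0 + m' := by omega
            rw [i1, i2, hWper 1, hWper 0] at h
            simpa using h
          · have h := hWalt' (τ - 1)
            have i1 : τ - 1 + 2 = τ + 1 := by omega
            have i2 : τ - 1 + 1 = τ := by omega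
            rw [i1, i2] at h
            exact h
        have hWwin : ∀ t, ∃ σ, ∀ j, j ≤ m' → b4 (σ + j) = W (t + j) := by
          intro t
          obtain ⟨σ, hfull, hd2, hm2, hm21⟩ := hWwin0 t
          refine ⟨σ, fun j hj => ?_⟩
          rcases Nat.eq_zero_or_pos j with h0 | hpos
          · subst h0
            -- b4 σ = W t
            have e1 := hfull 0 (by omega)
            simp only [Nat.add_zero] at e1 ⊢
            rw [e1] at hm21
            have halt := hWalt t
            have i1 : t + 1 + 0 = t + 1 := by omega
            rw [i1] at hm21
            have hb : (b4 σ).val < 4 := (b4 σ).isLt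
            have hw : (W t).val < 4 := (W t).isLt
            have : (b4 σ).val = (W t).val := by
              have hWd : (W t).val / 2 = (b4 σ).val / 2 := hd2.symm
              have hW1 : (W (t+1)).val % 2 ≠ (W t).val % 2 := halt
              omega
            exact Fin.ext this
          · have := hfull (j-1) (by omega)
            have i1 : σ + 1 + (j-1) = σ + j := by omega
            have i2 : t + 1 + (j-1) = t + j := by omega
            rw [i1, i2] at this
            exact this
        exact ih m' (by omega) (by omega) W hWper hWwin

end B4


def Xw (b4 : ℕ → Fin 4) : ℕ → Fin 2 := fun n => (g2 (b4 (n / 19))).getD (n % 19) 0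

lemma hXblock (b4 : ℕ → Fin 4) (t j : ℕ) (hj : j < 19) :
    Xw b4 (19 * t + j) = (g2 (b4 t)).getD j 0 := by
  unfold Xw
  have h1 : (19*t+j)/19 = t := by omega
  have h2 : (19*t+j)%19 = j := by omega
  rw [h1, h2]

lemma hXG (b4 : ℕ → Fin 4) (p k : ℕ) (hk : k < 19) :
    Xw b4 (p + k) = G (p % 19) (b4 (p/19)) (b4 (p/19+1)) k := by
  unfold Xw G
  by_cases h : p % 19 + k < 19
  · have h1 : (p + k) / 19 = p / 19 := by omega
    have h2 : (p + k) % 19 = p % 19 + k := by omega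
    rw [h1, h2, if_pos h]
  · have h1 : (p + k) / 19 = p / 19 + 1 := by omega
    have h2 : (p + k) % 19 = p % 19 + k - 19 := by omega
    rw [h1, h2, if_neg h]

lemma hsync {b4 : ℕ → Fin 4} (hfix : ∀ n, [b4 (2 * n), b4 (2 * n + 1)] = mb4 (b4 n))
    (p q : ℕ) (h : ∀ k, k < 14 → Xw b4 (p + k) = Xw b4 (q + k)) : p % 19 = q % 19 := by
  have e1 : enc (Xw b4) p 14 = enc (G (p % 19) (b4 (p/19)) (b4 (p/19+1))) 0 14 :=
    enc_congr (fun k hk => by rw [hXG b4 p k (by omega), Nat.zero_add])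
  have e2 : enc (Xw b4) q 14 = enc (G (q % 19) (b4 (q/19)) (b4 (q/19+1))) 0 14 :=
    enc_congr (fun k hk => by rw [hXG b4 q k (by omega), Nat.zero_add])
  have e3 : enc (Xw b4) p 14 = enc (Xw b4) q 14 := enc_congr h
  have m1 := sync_mem ⟨p % 19, by omega⟩ (b4 (p/19), b4 (p/19+1)) (hS2 hfix (p/19))
  have m2 := sync_mem ⟨q % 19, by omega⟩ (b4 (q/19), b4 (q/19+1)) (hS2 hfix (q/19))
  have := sync_uniq _ m1 _ m2 (by
    show enc (G (p % 19) (b4 (p/19)) (b4 (p/19+1))) 0 14 = enc (G (q % 19) (b4 (q/19)) (b4 (q/19+1))) 0 14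
    rw [← e1, ← e2, e3])
  exact this

lemma range_map_getD (f : ℕ → Fin 2) {n k : ℕ} (hk : k < n) (d : Fin 2) :
    ((List.range n).map f).getD k d = f k := by
  rw [List.getD_eq_getElem _ _ (by simpa using hk)]
  simp

lemma rot_getD (u : List (Fin 2)) (j k : ℕ) (hj : j ≤ u.length) (hk : k < u.length) :
    (u.drop j ++ u.take j).getD k 0 = u.getD ((j + k) % u.length) 0 := by
  have hdl : (u.drop j).length = u.length - j := by simp
  by_cases h : k < u.length - j
  · rw [List.getD_eq_getElem?_getD, List.getElem?_append_left (by omega), List.getElem?_drop]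
    have hmod : (j + k) % u.length = j + k := Nat.mod_eq_of_lt (by omega)
    rw [hmod, List.getD_eq_getElem?_getD]
  · rw [List.getD_eq_getElem?_getD, List.getElem?_append_right (by omega)]
    rw [hdl]
    have ht : (u.take j)[k - (u.length - j)]? = u[k - (u.length - j)]? := by
      rw [List.getElem?_take, if_pos (by omega)]
    rw [ht]
    have hmod : (j + k) % u.length = k - (u.length - j) := by
      rw [Nat.mod_eq_sub_mod (by omega), Nat.mod_eq_of_lt (by omega)]
      omega
    rw [hmod, List.getD_eq_getElem?_getD]

end Stmt3

/-- If `b₄` is the fixed point starting with `0` of the morphism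
`0 ↦ 01, 1 ↦ 21, 2 ↦ 03, 3 ↦ 23`, then the infinite binary word `g₂(b₄)`
(the concatenation `g₂(b₄ 0) g₂(b₄ 1) …`, position `n` being letter `n % 19`
of `g₂(b₄ (n / 19))`) avoids every conjugacy class of length at least `5`:
there is no word `u` with `|u| ≥ 5` all of whose cyclic conjugates are
factors of `g₂(b₄)`. -/
theorem stmt_3 (b4 : ℕ → Fin 4) (hb0 : b4 0 = 0)
    (hfix : ∀ n, [b4 (2 * n), b4 (2 * n + 1)] = mb4 (b4 n)) :
    ¬ ∃ u : List (Fin 2), 5 ≤ u.length ∧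
        ∀ v w : List (Fin 2), u = w ++ v →
          IsFactorOfInf (v ++ w) (fun n => (g2 (b4 (n / 19))).getD (n % 19) 0) := by
  rintro ⟨u, hu5, hconj⟩
  have hconj' : ∀ v w : List (Fin 2), u = w ++ v →
      ∃ i : ℕ, v ++ w = (List.range (v ++ w).length).map fun j => Stmt3.Xw b4 (i + j) :=
    hconj
  clear hconj
  set n := u.length with hn
  have hn0 : 0 < n := by omega
  set y : ℕ → Fin 2 := fun t => u.getD (t % n) 0 with hy
  have hyper : ∀ t, y (t + n) = y t := by
    intro t
    simp only [hy]
    rw [Nat.add_mod_right]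
  have hrot : ∀ i, ∃ q, ∀ k, k < n → Stmt3.Xw b4 (q + k) = y (i + k) := by
    intro i
    have hin : i % n < n := Nat.mod_lt _ hn0
    obtain ⟨q, hq⟩ := hconj' (u.drop (i % n)) (u.take (i % n)) (List.take_append_drop _ u).symm
    have hlen : (u.drop (i % n) ++ u.take (i % n)).length = n := by
      simp only [List.length_append, List.length_drop, List.length_take]
      omega
    rw [hlen] at hq
    refine ⟨q, fun k hk => ?_⟩
    have h1 : (u.drop (i % n) ++ u.take (i % n)).getD k 0 = Stmt3.Xw b4 (q + k) := by
      rw [hq, Stmt3.range_map_getD _ hk]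
    have h2 : (u.drop (i % n) ++ u.take (i % n)).getD k 0 = y (i + k) := by
      rw [Stmt3.rot_getD u (i % n) k (le_of_lt hin) (by omega)]
      simp only [hy]
      rw [← hn, Nat.mod_add_mod]
    rw [← h1, h2]
  choose p hp using hrot
  have short : n ∈ ([5,6,7,8,9,10,11,12,13,14,19] : List ℕ) → False := by
    intro hmem
    have hn19 : n ≤ 19 := by
      simp only [List.mem_cons, List.not_mem_nil, or_false] at hmem
      omega
    have hE : ∀ i, Stmt3.enc y i n ∈ Stmt3.TT n := by
      intro i
      have e1 : Stmt3.enc y i n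
          = Stmt3.enc (Stmt3.G (p i % 19) (b4 (p i / 19)) (b4 (p i / 19 + 1))) 0 n := by
        apply Stmt3.enc_congr
        intro k hk
        rw [← hp i k hk, Nat.zero_add, Stmt3.hXG b4 (p i) k (by omega)]
      rw [e1]
      exact Stmt3.TT_mem n hmem ⟨p i % 19, by omega⟩ (b4 (p i / 19), b4 (p i / 19 + 1))
        (Stmt3.hS2 hfix (p i / 19))
    have hEiter : ∀ k, Stmt3.enc y k n = (Stmt3.rotN n)^[k] (Stmt3.enc y 0 n) := by
      intro k
      induction k with
      | zero => rfl
      | succ j ihj =>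
        rw [Function.iterate_succ_apply', ← ihj, ← Stmt3.enc_rot (by omega) (hyper j)]
    obtain ⟨k, hk, hnot⟩ := Stmt3.TT_cert n hmem (Stmt3.enc y 0 n) (hE 0)
    exact hnot (by rw [← hEiter k]; exact hE k)
  by_cases hsmall : n < 15
  · exact short (by simp only [List.mem_cons, List.not_mem_nil, or_false]; omega)
  push_neg at hsmall
  have hstep : ∀ i, p (i+1) % 19 = (p i + 1) % 19 := by
    intro i
    apply Stmt3.hsync hfix
    intro k hk
    have h1 : Stmt3.Xw b4 (p i + (1 + k)) = y (i + (1 + k)) := hp i (1+k) (by omega)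
    have h2 : Stmt3.Xw b4 (p (i+1) + k) = y (i + 1 + k) := hp (i+1) k (by omega)
    have i1 : p i + 1 + k = p i + (1 + k) := by omega
    have i2 : i + (1 + k) = i + 1 + k := by omega
    rw [h2, i1, h1, i2]
  have hchain : ∀ i, p i % 19 = (p 0 + i) % 19 := by
    intro i
    induction i with
    | zero => rfl
    | succ j ihj =>
      have := hstep j
      omega
  have hdvd : n % 19 = 0 := by
    have hs := Stmt3.hsync hfix (p n) (p 0) (fun k hk => by
      rw [hp n k (by omega), hp 0 k (by omega)]
      have i1 : n + k = k + n := by omega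
      rw [i1, hyper k, Nat.zero_add])
    have hc := hchain n
    omega
  by_cases hn19 : n = 19
  · exact short (by rw [hn19]; simp)
  set m := n / 19 with hmdef
  have hnm : n = 19 * m := by omega
  have hm2 : 2 ≤ m := by omega
  set δ := (25 - p 0 % 19) % 19 with hδ
  set P : ℕ → ℕ := fun c => p (19*c + δ) with hPdef
  have hP6 : ∀ c, P c % 19 = 6 := by
    intro c
    have hc := hchain (19*c + δ)
    simp only [hPdef]
    omega
  set Q : ℕ → ℕ := fun c => P c / 19 with hQdef
  have hPQ : ∀ c, P c = 19 * Q c + 6 := by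
    intro c
    have := hP6 c
    simp only [hQdef]
    omega
  have hwinc : ∀ c k, k < n → Stmt3.Xw b4 (P c + k) = y (19*c + δ + k) := by
    intro c k hk
    have := hp (19*c + δ) k hk
    simp only [hPdef]
    exact this
  have g2inj19 : ∀ a a' : Fin 4,
      (∀ j, j < 19 → (g2 a).getD j 0 = (g2 a').getD j 0) → a = a' := by decide
  have suf13 : ∀ a a' : Fin 4,
      (∀ j, j < 13 → (g2 a).getD (6+j) 0 = (g2 a').getD (6+j) 0) → a = a' := by decide
  have pre6 : ∀ a a' : Fin 4,
      (∀ j, j < 6 → (g2 a).getD j 0 = (g2 a').getD j 0) → a = a' := by decide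
  have hchar : ∀ t j, j < 19 → (g2 (b4 t)).getD j 0 = Stmt3.Xw b4 (19 * t + j) :=
    fun t j hj => (Stmt3.hXblock b4 t j hj).symm
  have hcharZ : ∀ c j, j < 19 → (g2 (b4 (Q c + 1))).getD j 0 = y (19*c + δ + (13 + j)) := by
    intro c j hj
    have h1 := hchar (Q c + 1) j hj
    have i1 : 19 * (Q c + 1) + j = P c + (13 + j) := by
      have := hPQ c
      omega
    rw [h1, i1, hwinc c (13 + j) (by omega)]
  have hfull : ∀ c k, k + 2 ≤ m → b4 (Q c + 1 + k) = b4 (Q (c+k) + 1) := by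
    intro c k hk
    apply g2inj19
    intro j hj
    have h1 := hchar (Q c + 1 + k) j hj
    have i1 : 19 * (Q c + 1 + k) + j = P c + (13 + 19*k + j) := by
      have := hPQ c
      omega
    rw [h1, i1, hwinc c (13 + 19*k + j) (by omega), hcharZ (c+k) j hj]
    congr 1
    omega
  have hleft : ∀ c, b4 (Q (c+1)) = b4 (Q c + 1) := by
    intro c
    apply suf13
    intro j hj
    have h1 := hchar (Q (c+1)) (6+j) (by omega)
    have i1 : 19 * Q (c+1) + (6+j) = P (c+1) + j := by
      have := hPQ (c+1)
      omega
    rw [h1, i1, hwinc (c+1) j (by omega), hcharZ c (6+j) (by omega)]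
    congr 1
    omega
  have hright : ∀ c, b4 (Q c + m) = b4 (Q (c + (m-1)) + 1) := by
    intro c
    apply pre6
    intro j hj
    have h1 := hchar (Q c + m) j (by omega)
    have i1 : 19 * (Q c + m) + j = P c + (13 + 19*(m-1) + j) := by
      have := hPQ c
      omega
    rw [h1, i1, hwinc c (13 + 19*(m-1) + j) (by omega), hcharZ (c+(m-1)) j (by omega)]
    congr 1
    omega
  have hZper : ∀ c, b4 (Q (c+m) + 1) = b4 (Q c + 1) := by
    intro c
    apply g2inj19
    intro j hj
    rw [hcharZ (c+m) j hj, hcharZ c j hj]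
    have i1 : 19*(c+m) + δ + (13 + j) = (19*c + δ + (13 + j)) + n := by omega
    rw [i1, hyper]
  have hZwin : ∀ t, ∃ s, ∀ j, j ≤ m → b4 (s + j) = b4 (Q (t + j) + 1) := by
    intro t
    refine ⟨Q (t+1), fun j hj => ?_⟩
    by_cases hj0 : j = 0
    · subst hj0
      simpa using hleft t
    by_cases hjm : j = m
    · subst hjm
      have h := hright (t+1)
      have i1 : t + 1 + (m-1) = t + m := by omega
      rw [i1] at h
      exact h
    · have h := hfull (t+1) (j-1) (by omega)
      have i1 : Q (t+1) + 1 + (j-1) = Q (t+1) + j := by omega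
      have i2 : t + 1 + (j-1) = t + j := by omega
      rw [i1, i2] at h
      exact h
  exact Stmt3.descent hfix m (by omega) (fun c => b4 (Q c + 1)) hZper hZwin
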